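/- Let F_𝟏 be the constant function 1, ς the identity of [0,1], and σ ∈ Σ any continuous non-decreasing surjection of [0,1]. Then ρ⁺((F_𝟏)^ς, (F_𝟏)^σ) = 0; however, if σ is not strictly increasing, there is no increasing homeomorphism γ of [0,1] with σ = ς ∘ γ. -/

import Mathlib

open Filter

/-- A càdlàg function on `[0,1]`: right-continuous on `[0,1)`, left limits on `(0,1]`. -/
def Cadlag (f : unitInterval → ℝ) : Prop :=
  (∀ t : unitInterval, (t : ℝ) < 1 →
    Filter.Tendsto f (nhdsWithin t (Set.Ioi t)) (nhds (f t))) ∧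
  (∀ t : unitInterval, 0 < (t : ℝ) →
    ∃ l : ℝ, Filter.Tendsto f (nhdsWithin t (Set.Iio t)) (nhds l))

/-- Increasing homeomorphism of `[0,1]` onto itself. -/
def IsIncHomeo (γ : unitInterval → unitInterval) : Prop :=
  Continuous γ ∧ StrictMono γ ∧ Function.Bijective γ

/-- `Σ`: continuous non-decreasing surjections of `[0,1]` onto itself. -/
def InSigma (σ : unitInterval → unitInterval) : Prop :=
  Continuous σ ∧ Monotone σ ∧ Function.Surjective σ

/-- Skorokhod distance on functions on `[0,1]`. -/
noncomputable def skorokhodDist (f g : unitInterval → ℝ) : ℝ :=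
  sInf { c : ℝ | ∃ γ : unitInterval → unitInterval, IsIncHomeo γ ∧
    (⨆ s : unitInterval, |f s - g (γ s)|) + (⨆ s : unitInterval, |(s : ℝ) - (γ s : ℝ)|) = c }

/-- Extended Skorokhod semi-distance on turbofunctions. -/
noncomputable def rhoPlus (P Q : (unitInterval → ℝ) × (unitInterval → unitInterval)) : ℝ :=
  sInf { c : ℝ | ∃ γ : unitInterval → unitInterval, IsIncHomeo γ ∧
    (⨆ t : unitInterval, |P.1 (γ t) - Q.1 t|) +
    (⨆ t : unitInterval, |(P.2 (γ t) : ℝ) - (Q.2 t : ℝ)|) = c }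

instance : Fact ((0:ℝ) ≤ 1) := ⟨zero_le_one⟩

/-- Right-continuous inverse `σ⁻¹(s) = max {t : σ t ≤ s}` (as a supremum). -/
noncomputable def rcInv (σ : unitInterval → unitInterval) (s : unitInterval) : unitInterval :=
  sSup {t : unitInterval | σ t ≤ s}

lemma sigma_zero {s : unitInterval → unitInterval} (hs : InSigma s) : s 0 = 0 := by
  obtain ⟨a, ha⟩ := hs.2.2 0
  have h : s 0 ≤ s a := hs.2.1 unitInterval.nonneg'
  rw [ha] at h
  exact le_antisymm h unitInterval.nonneg'

lemma sigma_one {s : unitInterval → unitInterval} (hs : InSigma s) : s 1 = 1 := by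
  obtain ⟨a, ha⟩ := hs.2.2 1
  have h : s a ≤ s 1 := hs.2.1 unitInterval.le_one'
  rw [ha] at h
  exact le_antisymm unitInterval.le_one' h

lemma key {s : unitInterval → unitInterval} (hs : InSigma s) {e : ℝ} (he : 0 < e) :
    ∃ γ : unitInterval → unitInterval, IsIncHomeo γ ∧
      (⨆ t : unitInterval, |(γ t : ℝ) - (s t : ℝ)|) ≤ e := by
  have h1e : (0:ℝ) < 1 + e := by linarith
  have hmem : ∀ t : unitInterval, ((s t : ℝ) + e * t) / (1 + e) ∈ unitInterval := by
    intro t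
    constructor
    · apply div_nonneg _ h1e.le
      have h1 := (s t).2.1
      have h2 := t.2.1
      nlinarith
    · rw [div_le_one h1e]
      have h1 := (s t).2.2
      have h2 := t.2.2
      nlinarith
  set γ : unitInterval → unitInterval :=
    fun t => ⟨((s t : ℝ) + e * t) / (1 + e), hmem t⟩ with hγ
  have hmono : StrictMono γ := by
    intro t u htu
    rw [hγ, Subtype.mk_lt_mk, div_lt_div_iff_of_pos_right h1e]
    have h1 : (s t : ℝ) ≤ s u := hs.2.1 htu.le
    have h2 : (t : ℝ) < u := htu
    nlinarith
  have hcont : Continuous γ := by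
    apply Continuous.subtype_mk
    exact ((continuous_subtype_val.comp hs.1).add
      (continuous_const.mul continuous_subtype_val)).div_const _
  have hγ0 : γ 0 = 0 := by
    rw [hγ]
    ext
    simp [sigma_zero hs]
  have hγ1 : γ 1 = 1 := by
    rw [hγ]
    ext
    simp [sigma_one hs]
    field_simp
    exact h1e.ne'
  have hsurj : Function.Surjective γ := by
    intro y
    have := intermediate_value_univ (0 : unitInterval) 1 hcont
    rw [hγ0, hγ1] at this
    exact this ⟨unitInterval.nonneg', unitInterval.le_one'⟩
  refine ⟨γ, ⟨hcont, hmono, hmono.injective, hsurj⟩, ?_⟩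
  apply ciSup_le
  intro t
  have hval : (γ t : ℝ) - (s t : ℝ) = e * ((t : ℝ) - s t) / (1 + e) := by
    rw [hγ]
    field_simp
    ring
  rw [hval, abs_div, abs_of_pos h1e, div_le_iff₀ h1e, abs_mul, abs_of_pos he]
  have h3 : |(t : ℝ) - (s t : ℝ)| ≤ 1 := by
    rw [abs_le]
    have h1 := (s t).2.1
    have h2 := (s t).2.2
    have h4 := t.2.1
    have h5 := t.2.2
    constructor <;> linarith
  nlinarith

theorem const_one_counterexample (σ₀ : unitInterval → unitInterval) (hσ : InSigma σ₀) :
    rhoPlus ((fun _ => (1 : ℝ)), id) ((fun _ => (1 : ℝ)), σ₀) = 0 ∧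
    (¬ StrictMono σ₀ →
      ¬ ∃ γ : unitInterval → unitInterval, IsIncHomeo γ ∧ σ₀ = id ∘ γ) := by
  constructor
  · rw [rhoPlus]
    set S : Set ℝ := { c : ℝ | ∃ γ : unitInterval → unitInterval, IsIncHomeo γ ∧
      (⨆ t : unitInterval, |(fun _ => (1:ℝ)) (γ t) - (fun _ => (1:ℝ)) t|) +
      (⨆ t : unitInterval, |((id (γ t) : unitInterval) : ℝ) - ((σ₀ t : unitInterval) : ℝ)|) = c}
      with hS
    have hfirst : ∀ γ : unitInterval → unitInterval,
        (⨆ t : unitInterval, |(fun _ => (1:ℝ)) (γ t) - (fun _ => (1:ℝ)) t|) = 0 := by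
      intro γ
      simp
    have hlb : ∀ c ∈ S, (0:ℝ) ≤ c := by
      rintro c ⟨γ, hγ, rfl⟩
      have h1 : (0:ℝ) ≤ ⨆ t : unitInterval, |((id (γ t) : unitInterval) : ℝ) - ((σ₀ t : unitInterval) : ℝ)| :=
        Real.iSup_nonneg fun t => abs_nonneg _
      have h2 : (0:ℝ) ≤ ⨆ t : unitInterval, |(fun _ => (1:ℝ)) (γ t) - (fun _ => (1:ℝ)) t| :=
        Real.iSup_nonneg fun t => abs_nonneg _
      linarith
    have hbdd : BddBelow S := ⟨0, hlb⟩
    have hsmall : ∀ e : ℝ, 0 < e → ∃ c ∈ S, c ≤ e := by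
      intro e he
      obtain ⟨γ, hγ, hle⟩ := key hσ he
      refine ⟨_, ⟨γ, hγ, rfl⟩, ?_⟩
      rw [hfirst γ, zero_add]
      exact hle
    have hne : S.Nonempty := by
      obtain ⟨c, hc, _⟩ := hsmall 1 one_pos
      exact ⟨c, hc⟩
    apply le_antisymm
    · by_contra h
      push_neg at h
      obtain ⟨c, hc, hce⟩ := hsmall (sInf S / 2) (by linarith)
      have := csInf_le hbdd hc
      linarith
    · exact le_csInf hne hlb
  · intro hns ⟨γ, hγ, heq⟩
    exact hns (by rw [heq]; exact hγ.2.1)
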